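/- For all n ≥ 1, C_α·α^n − α^(−n/2) < P_n < C_α·α^n + α^(−n/2), where α is the real root of x^3 − x − 1 and C_α = (α+1)/(−α^2+3α+1); in particular P_n is the nearest integer to C_α·α^n for n ≥ 3. -/

import Mathlib

def padovan : ℕ → ℕ
  | 0 => 1
  | 1 => 1
  | 2 => 1
  | n + 3 => padovan (n + 1) + padovan n

set_option maxHeartbeats 1000000 in
theorem padovan_nearest_integer (α : ℝ) (hα : α ^ 3 = α + 1)
    (C : ℝ) (hC : C = (α + 1) / (-α ^ 2 + 3 * α + 1)) :
    ∀ n : ℕ, 1 ≤ n →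
      (C * α ^ n - α ^ (-(n : ℝ) / 2) < (padovan n : ℝ) ∧
       (padovan n : ℝ) < C * α ^ n + α ^ (-(n : ℝ) / 2)) ∧
      (3 ≤ n → (padovan n : ℤ) = round (C * α ^ n)) := by
  have hα1 : (1.32:ℝ) < α := by nlinarith [sq_nonneg (α + 0.66), sq_nonneg (α - 1.32)]
  have hα2 : α < 1.33 := by nlinarith [sq_nonneg (α + 0.665), sq_nonneg (α - 1.33)]
  have hαpos : (0:ℝ) < α := by linarith
  have hαne : α ≠ 0 := ne_of_gt hαpos
  have hsq : α ^ 2 < 1.769 := by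
    have h := mul_lt_mul'' hα2 hα2 (by linarith) (by linarith)
    nlinarith [h]
  have hsqlo : (1.742:ℝ) < α ^ 2 := by
    have h := mul_lt_mul'' hα1 hα1 (by norm_num) (by norm_num)
    nlinarith [h]
  have hden : (0:ℝ) < -α ^ 2 + 3 * α + 1 := by linarith
  have hCeq : C * (-α ^ 2 + 3 * α + 1) = α + 1 := by
    rw [hC]; field_simp
    exact div_self (ne_of_gt (by nlinarith))
  have hC1 : (0.71:ℝ) < C := by
    by_contra hcon
    push_neg at hcon
    have h := mul_le_mul_of_nonneg_right hcon (le_of_lt hden)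
    have h2 : (0.71:ℝ) * (-α ^ 2 + 3 * α + 1) < 0.71 * 3.248 := by linarith
    linarith
  have hC2 : C < 0.74 := by
    by_contra hcon
    push_neg at hcon
    have h := mul_le_mul_of_nonneg_right hcon (le_of_lt hden)
    have h2 : (0.74:ℝ) * 3.19 < 0.74 * (-α ^ 2 + 3 * α + 1) := by linarith
    linarith
  set E : ℕ → ℝ := fun n => (padovan n : ℝ) - C * α ^ n with hEdef
  have hE : ∀ n, E n = (padovan n : ℝ) - C * α ^ n := fun n => rfl
  have hpow : ∀ n : ℕ, α ^ (n + 3) = α ^ (n + 1) + α ^ n := by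
    intro n
    have h : α ^ (n + 3) = α ^ n * α ^ 3 := by ring
    rw [h, hα]; ring
  have hE3 : ∀ n, E (n + 3) = E (n + 1) + E n := by
    intro n
    rw [hE, hE, hE, hpow]
    show ((padovan (n+1) + padovan n : ℕ) : ℝ) - _ = _
    push_cast; ring
  have q : ∀ n, E (n + 2) + α * E (n + 1) + E n / α = 0 := by
    intro n
    induction n with
    | zero =>
      rw [hE, hE, hE]
      show ((1:ℕ):ℝ) - C * α ^ 2 + α * (((1:ℕ):ℝ) - C * α ^ 1) + (((1:ℕ):ℝ) - C * α ^ 0) / α = 0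
      push_cast
      have hb2 : (α + α ^ 2 + 1) - C * (2 * α ^ 3 + 1) = 0 := by
        linear_combination (-α ^ 2) * hCeq + (C * (1 - α) - 1) * hα
      field_simp
      linear_combination hb2
    | succ k ih =>
      have h3 := hE3 k
      have h4 : E (k + 2) = -α * E (k + 1) - E k / α := by
        field_simp at ih ⊢
        linarith
      rw [show k + 1 + 2 = k + 3 from rfl, h3, h4]
      have h5 : E (k + 1) + E k + α * (-α * E (k + 1) - E k / α) + E (k + 1) / α
          = (-(E (k + 1)) / α) * (α ^ 3 - (α + 1)) := by field_simp; ring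
      rw [h5, hα]; ring
  set F : ℕ → ℝ := fun n => E (n + 1) ^ 2 + α * E n * E (n + 1) + E n ^ 2 / α with hFdef
  have hF : ∀ n, F (n + 1) = F n / α := by
    intro n
    have h4 : E (n + 2) = -α * E (n + 1) - E n / α := by
      have := q n; field_simp at this ⊢; linarith
    show E (n + 2) ^ 2 + α * E (n + 1) * E (n + 2) + E (n + 1) ^ 2 / α = _
    rw [h4]
    show _ = (E (n + 1) ^ 2 + α * E n * E (n + 1) + E n ^ 2 / α) / α
    field_simp
    ring
  have hFn : ∀ n, F n = F 0 / α ^ n := by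
    intro n
    induction n with
    | zero => rw [pow_zero, div_one]
    | succ k ih => rw [hF k, ih, div_div, ← pow_succ]
  have hcF : ∀ n, (3 - α) * E n ^ 2 ≤ 4 * α * F n := by
    intro n
    show (3 - α) * E n ^ 2 ≤ 4 * α * (E (n + 1) ^ 2 + α * E n * E (n + 1) + E n ^ 2 / α)
    have hexp : 4 * α * (E (n + 1) ^ 2 + α * E n * E (n + 1) + E n ^ 2 / α)
        = 4 * α * E (n + 1) ^ 2 + 4 * α ^ 2 * E n * E (n + 1) + 4 * E n ^ 2 := by
      field_simp
    rw [hexp]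
    have hz2 : (1 + α - α ^ 3) * E n ^ 2 = 0 := by rw [hα]; ring
    linarith [mul_nonneg hαpos.le (sq_nonneg (2 * E (n + 1) + α * E n)), hz2]
  have hE0 : E 0 = 1 - C := by rw [hE]; norm_num [padovan]
  have hE1 : E 1 = 1 - C * α := by rw [hE]; norm_num [padovan]
  -- numeric bounds
  have he0a : (0.26:ℝ) < 1 - C := by linarith
  have he0b : (1:ℝ) - C < 0.29 := by linarith
  have hCα1 : (0.937:ℝ) < C * α := by
    have h := mul_lt_mul'' hC1 hα1 (by norm_num) (by norm_num)
    linarith [h]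
  have hCα2 : C * α < 0.985 := by
    have h := mul_lt_mul'' hC2 hα2 (by linarith) (by linarith)
    linarith [h]
  have he1a : (0.015:ℝ) < 1 - C * α := by linarith
  have he1b : (1:ℝ) - C * α < 0.07 := by linarith
  have hgF0 : α * F 0 = α * (1 - C * α) ^ 2 + α ^ 2 * (1 - C) * (1 - C * α) + (1 - C) ^ 2 := by
    have h : F 0 = (1 - C * α) ^ 2 + α * (1 - C) * (1 - C * α) + (1 - C) ^ 2 / α := by
      show E 1 ^ 2 + α * E 0 * E 1 + E 0 ^ 2 / α = _
      rw [hE0, hE1]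
    rw [h]; field_simp
  have hx1 : (1 - C * α) ^ 2 < 0.005 := by
    have h := mul_lt_mul'' he1b he1b (by linarith) (by linarith)
    nlinarith [h]
  have hx0 : (1 - C) ^ 2 < 0.085 := by
    have h := mul_lt_mul'' he0b he0b (by linarith) (by linarith)
    nlinarith [h]
  have hp1 : α * (1 - C * α) ^ 2 < 0.0067 := by
    have h := mul_lt_mul'' hα2 hx1 (by linarith) (by positivity)
    linarith [h]
  have hee : (1 - C) * (1 - C * α) < 0.021 := by
    have h := mul_lt_mul'' he0b he1b (by linarith) (by linarith)
    linarith [h]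
  have hp2 : α ^ 2 * (1 - C) * (1 - C * α) < 0.038 := by
    have h := mul_lt_mul'' hsq hee (by positivity)
      (mul_nonneg (by linarith) (by linarith))
    nlinarith [h]
  have h4 : α * F 0 < 0.13 := by
    rw [hgF0]
    nlinarith [hp1, hp2, hx0]
  have h1 : 4 * α * F 0 < 3 - α := by nlinarith [h4]
  have hprod : (1.67:ℝ) * 2.32 < (3 - α) * (α + 1) := by
    have h := mul_lt_mul'' (show (1.67:ℝ) < 3 - α by linarith) (show (2.32:ℝ) < α + 1 by linarith)
      (by norm_num) (by norm_num)
    linarith [h]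
  have h2 : 16 * (α * F 0) < (3 - α) * (α + 1) := by nlinarith [hprod, h4]
  have hF0pos : 0 < α * F 0 := by
    rw [hgF0]
    have t1 : 0 ≤ α * (1 - C * α) ^ 2 := by positivity
    have t2 : 0 < α ^ 2 * (1 - C) * (1 - C * α) := by
      apply mul_pos
      apply mul_pos (by positivity) (by linarith)
      linarith
    have t3 : 0 ≤ (1 - C) ^ 2 := sq_nonneg _
    linarith
  intro n hn
  have hαn : (0:ℝ) < α ^ n := pow_pos hαpos n
  have hEn2 : (3 - α) * E n ^ 2 ≤ 4 * α * F 0 / α ^ n := by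
    have h5 := hcF n
    rw [hFn n] at h5
    calc (3 - α) * E n ^ 2 ≤ 4 * α * (F 0 / α ^ n) := h5
      _ = 4 * α * F 0 / α ^ n := by ring
  have h3α : (0:ℝ) < 3 - α := by linarith
  have h5 : E n ^ 2 < (α ^ n)⁻¹ := by
    have h6 : 4 * α * F 0 / α ^ n < (3 - α) / α ^ n := div_lt_div_of_pos_right h1 hαn
    have h7 : (3 - α) * E n ^ 2 < (3 - α) * (α ^ n)⁻¹ := by
      calc (3 - α) * E n ^ 2 < (3 - α) / α ^ n := lt_of_le_of_lt hEn2 h6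
        _ = (3 - α) * (α ^ n)⁻¹ := by ring
    exact lt_of_mul_lt_mul_left h7 (le_of_lt h3α)
  set r : ℝ := α ^ (-(n : ℝ) / 2) with hrdef
  have hr : (0:ℝ) < r := Real.rpow_pos_of_pos hαpos _
  have hr2 : r ^ 2 = (α ^ n)⁻¹ := by
    rw [sq, hrdef, ← Real.rpow_add hαpos]
    have h : -(n : ℝ) / 2 + -(n : ℝ) / 2 = -(n : ℝ) := by ring
    rw [h, Real.rpow_neg hαpos.le, Real.rpow_natCast]
  have h7 : E n ^ 2 < r ^ 2 := by rw [hr2]; exact h5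
  obtain ⟨habs1, habs2⟩ := abs_lt_of_sq_lt_sq' h7 hr.le
  have hEeq : E n = (padovan n : ℝ) - C * α ^ n := hE n
  refine ⟨⟨by linarith, by linarith⟩, ?_⟩
  intro h3n
  have hα3 : α ^ 3 ≤ α ^ n := pow_le_pow_right₀ (by linarith) h3n
  have hα3pos : (0:ℝ) < α ^ 3 := by positivity
  have h8 : 4 * α * F 0 / α ^ n ≤ 4 * α * F 0 / α ^ 3 :=
    div_le_div_of_nonneg_left (by linarith : (0:ℝ) ≤ 4 * α * F 0) hα3pos hα3
  have h9 : 4 * α * F 0 / α ^ 3 < (3 - α) / 4 := by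
    rw [hα, div_lt_div_iff₀ (by linarith) (by norm_num : (0:ℝ) < 4)]
    linarith [h2]
  have h10 : E n ^ 2 < 1 / 4 := by
    have h11 : (3 - α) * E n ^ 2 < (3 - α) * (1 / 4) := by
      calc (3 - α) * E n ^ 2 ≤ 4 * α * F 0 / α ^ n := hEn2
        _ ≤ 4 * α * F 0 / α ^ 3 := h8
        _ < (3 - α) / 4 := h9
        _ = (3 - α) * (1 / 4) := by ring
    exact lt_of_mul_lt_mul_left h11 (le_of_lt h3α)
  obtain ⟨h12a, h12b⟩ := abs_lt_of_sq_lt_sq'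
    (show E n ^ 2 < (1/2:ℝ) ^ 2 by norm_num; linarith [h10]) (by norm_num)
  rw [round_eq]
  symm
  rw [Int.floor_eq_iff]
  constructor
  · push_cast
    linarith
  · push_cast
    linarith
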